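/- ∫_{ℝ^d} | π̃(θ) − π̂(θ) | dθ ≤ 2M·h·∫_{ℝ^d} K(u)‖u‖_2 du / ( B^{−1} Σ_{i=1}^B L(θ_i) ). -/

import Mathlib

open MeasureTheory Finset

lemma aux_integrable {d : ℕ} {F : EuclideanSpace ℝ (Fin d) → ℝ}
    (hF : Integrable F) (θ : EuclideanSpace ℝ (Fin d)) {h : ℝ} (hh : 0 < h) :
    Integrable (fun x => F (h⁻¹ • (x - θ))) :=
  (hF.comp_smul (inv_ne_zero hh.ne')).comp_sub_right θ

lemma aux_integral {d : ℕ} (F : EuclideanSpace ℝ (Fin d) → ℝ)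
    (θ : EuclideanSpace ℝ (Fin d)) {h : ℝ} (hh : 0 < h) :
    (∫ x, F (h⁻¹ • (x - θ))) = h ^ d * ∫ u, F u := by
  have h1 : (∫ x, F (h⁻¹ • (x - θ))) = ∫ x, (fun y => F (h⁻¹ • y)) (x - θ) := rfl
  rw [h1, integral_sub_right_eq_self (fun y => F (h⁻¹ • y)) θ,
    Measure.integral_comp_smul volume F h⁻¹, finrank_euclideanSpace_fin]
  rw [smul_eq_mul, ← inv_pow, inv_inv, abs_of_pos (pow_pos hh d)]

/-- the quantitative bound
`∫ |π̃ − π̂| ≤ 2·M·h·∫ K(u)‖u‖ du / (B⁻¹ Σᵢ L(θᵢ))`. -/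
theorem stmt_6
    (d B : ℕ) (hd : 1 ≤ d) (hB : 1 ≤ B)
    (θp : Fin B → EuclideanSpace ℝ (Fin d))
    (K : EuclideanSpace ℝ (Fin d) → ℝ)
    (hKmeas : Measurable K) (hKnonneg : ∀ u, 0 ≤ K u) (hKint : ∫ u, K u = 1)
    (hKmom : Integrable (fun u => K u * ‖u‖))
    (h : ℝ) (hh : 0 < h)
    (M : ℝ) (hM : 0 < M)
    (L : EuclideanSpace ℝ (Fin d) → ℝ)
    (hLnonneg : ∀ x, 0 ≤ L x) (hLmeas : Measurable L)
    (hLlip : ∀ x y, |L x - L y| ≤ M * ‖x - y‖)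
    (hLbdd : BddAbove (Set.range L))
    (hLsum : 0 < ∑ i, L (θp i))
    (πK : EuclideanSpace ℝ (Fin d) → ℝ)
    (hπK : ∀ x, πK x = (1 / (B * h ^ d)) * ∑ i, K (h⁻¹ • (x - θp i)))
    (hpos : 0 < ∫ x, πK x * L x)
    (πtil : EuclideanSpace ℝ (Fin d) → ℝ)
    (hπtil : ∀ x, πtil x =
      (∑ i, K (h⁻¹ • (x - θp i)) * L (θp i)) / (h ^ d * ∑ i, L (θp i)))
    (πhat : EuclideanSpace ℝ (Fin d) → ℝ)
    (hπhat : ∀ x, πhat x = πK x * L x / ∫ τ, πK τ * L τ) :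
    (∫ x, |πtil x - πhat x|) ≤
      2 * M * h * (∫ u, K u * ‖u‖) / ((B : ℝ)⁻¹ * ∑ i, L (θp i)) := by
  classical
  set S : ℝ := ∑ i, L (θp i) with hS
  set Z : ℝ := ∫ x, πK x * L x with hZ
  set C : ℝ := ∫ u, K u * ‖u‖ with hC
  have hB0 : (0:ℝ) < B := by exact_mod_cast hB
  have hhd : (0:ℝ) < h ^ d := pow_pos hh d
  have hBh : (0:ℝ) < B * h ^ d := mul_pos hB0 hhd
  have hC0 : 0 ≤ C := integral_nonneg fun u => mul_nonneg (hKnonneg u) (norm_nonneg u)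
  -- K is integrable
  have hKI : Integrable K := by
    by_contra hc
    rw [integral_undef hc] at hKint; norm_num at hKint
  -- per-point kernels
  set Ki : Fin B → EuclideanSpace ℝ (Fin d) → ℝ := fun i x => K (h⁻¹ • (x - θp i)) with hKi
  have hKi_int : ∀ i, Integrable (Ki i) := fun i => aux_integrable hKI (θp i) hh
  have hKi_nonneg : ∀ i x, 0 ≤ Ki i x := fun i x => hKnonneg _
  have hKi_val : ∀ i, (∫ x, Ki i x) = h ^ d := by
    intro i; rw [hKi]; simp only
    rw [aux_integral K (θp i) hh, hKint, mul_one]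
  -- moment kernels
  have hmom_eq : ∀ i, (fun x => Ki i x * ‖x - θp i‖) =
      fun x => h * ((fun u => K u * ‖u‖) (h⁻¹ • (x - θp i))) := by
    intro i; funext x
    simp only [norm_smul, norm_inv, Real.norm_eq_abs, abs_of_pos hh]
    rw [show h * (K (h⁻¹ • (x - θp i)) * (h⁻¹ * ‖x - θp i‖)) =
      (h * h⁻¹) * (K (h⁻¹ • (x - θp i)) * ‖x - θp i‖) from by ring,
      mul_inv_cancel₀ hh.ne', one_mul]
  have hKin_int : ∀ i, Integrable (fun x => Ki i x * ‖x - θp i‖) := by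
    intro i; rw [hmom_eq i]
    exact (aux_integrable hKmom (θp i) hh).const_mul h
  have hKin_val : ∀ i, (∫ x, Ki i x * ‖x - θp i‖) = h ^ (d + 1) * C := by
    intro i; rw [hmom_eq i, integral_const_mul, aux_integral (fun u => K u * ‖u‖) (θp i) hh]
    rw [← hC]; ring
  -- f and g
  set f : EuclideanSpace ℝ (Fin d) → ℝ :=
    fun x => (1 / (B * h ^ d)) * ∑ i, Ki i x * L x with hf
  set g : EuclideanSpace ℝ (Fin d) → ℝ :=
    fun x => (1 / (B * h ^ d)) * ∑ i, Ki i x * L (θp i) with hg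
  have hf_eq : ∀ x, πK x * L x = f x := by
    intro x; rw [hπK x, hf]; simp only [← Finset.sum_mul]; ring
  obtain ⟨Lmax, hLmax⟩ := hLbdd
  have hLmax' : ∀ x, L x ≤ Lmax := fun x => hLmax ⟨x, rfl⟩
  have hterm_f_int : ∀ i : Fin B, Integrable (fun x => Ki i x * L x) := by
    intro i
    have : Integrable (fun x => L x * Ki i x) :=
      Integrable.bdd_mul (hKi_int i) hLmeas.aestronglyMeasurable
        (c := Lmax) (Filter.Eventually.of_forall fun x => by rw [Real.norm_eq_abs, abs_of_nonneg (hLnonneg x)]; exact hLmax' x)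
    exact this.congr (by filter_upwards with x; ring)
  have hf_int : Integrable f :=
    (integrable_finset_sum univ fun i _ => hterm_f_int i).const_mul _
  have hg_int : Integrable g :=
    (integrable_finset_sum univ fun i _ => (hKi_int i).mul_const _).const_mul _
  have hg_val : (∫ x, g x) = S / B := by
    rw [hg]
    rw [integral_const_mul, integral_finset_sum univ fun i _ => (hKi_int i).mul_const _]
    have : ∀ i ∈ univ, (∫ x, Ki i x * L (θp i)) = h ^ d * L (θp i) := by
      intro i _; rw [integral_mul_const, hKi_val i]
    rw [Finset.sum_congr rfl this, ← Finset.mul_sum, ← hS]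
    field_simp
  have hZf : Z = ∫ x, f x := by
    rw [hZ]; exact integral_congr_ae (by filter_upwards with x; exact hf_eq x)
  -- pointwise bound |f - g| ≤ φ
  set φ : EuclideanSpace ℝ (Fin d) → ℝ :=
    fun x => (1 / (B * h ^ d)) * ∑ i, Ki i x * (M * ‖x - θp i‖) with hφ
  have hφ_int : Integrable φ :=
    (integrable_finset_sum univ fun i _ => by
      simpa [mul_left_comm, mul_comm] using (hKin_int i).const_mul M).const_mul _
  have hφ_val : (∫ x, φ x) = M * h * C := by
    rw [hφ, integral_const_mul, integral_finset_sum univ fun i _ => by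
      simpa [mul_left_comm, mul_comm] using (hKin_int i).const_mul M]
    have : ∀ i ∈ univ, (∫ x, Ki i x * (M * ‖x - θp i‖)) = M * (h ^ (d + 1) * C) := by
      intro i _
      rw [show (fun x => Ki i x * (M * ‖x - θp i‖)) = fun x => M * (Ki i x * ‖x - θp i‖) by
        funext x; ring]
      rw [integral_const_mul, hKin_val i]
    rw [Finset.sum_congr rfl this, Finset.sum_const, card_univ, Fintype.card_fin,
      nsmul_eq_mul]
    field_simp
    ring
  have hfg : ∀ x, |f x - g x| ≤ φ x := by
    intro x
    have : f x - g x = (1 / (B * h ^ d)) * ∑ i, Ki i x * (L x - L (θp i)) := by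
      rw [hf, hg]; simp only [mul_sub]
      rw [← mul_sub, ← Finset.sum_sub_distrib]
    rw [this, abs_mul, abs_of_pos (by positivity : (0:ℝ) < 1 / (B * h ^ d))]
    rw [hφ]
    refine mul_le_mul_of_nonneg_left ?_ (by positivity)
    refine le_trans (Finset.abs_sum_le_sum_abs _ _) (Finset.sum_le_sum fun i _ => ?_)
    rw [abs_mul, abs_of_nonneg (hKi_nonneg i x)]
    exact mul_le_mul_of_nonneg_left (hLlip x (θp i)) (hKi_nonneg i x)
  have hfgint : Integrable (fun x => f x - g x) := hf_int.sub hg_int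
  have h1 : (∫ x, |f x - g x|) ≤ M * h * C := by
    calc (∫ x, |f x - g x|) ≤ ∫ x, φ x :=
          integral_mono hfgint.abs hφ_int hfg
      _ = M * h * C := hφ_val
  have h2 : |Z - S / B| ≤ M * h * C := by
    rw [hZf, ← hg_val, ← integral_sub hf_int hg_int]
    calc |∫ x, f x - g x| ≤ ∫ x, |f x - g x| := by
          simpa [Real.norm_eq_abs] using norm_integral_le_integral_norm (fun x => f x - g x)
      _ ≤ M * h * C := h1
  have hSB : (0:ℝ) < S / B := div_pos hLsum hB0
  have hZ0 : (0:ℝ) < Z := hpos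
  -- decomposition constant
  set c : ℝ := (Z - S / B) / ((S / B) * Z) with hc
  have hf_nonneg : ∀ x, 0 ≤ f x := by
    intro x; rw [hf]
    exact mul_nonneg (by positivity)
      (Finset.sum_nonneg fun i _ => mul_nonneg (hKi_nonneg i x) (hLnonneg x))
  have hdecomp : ∀ x, πtil x - πhat x = (g x - f x) * (S / B)⁻¹ + f x * c := by
    intro x
    rw [hπtil x, hπhat x, hf_eq x, hc, hg]
    have hgid : (∑ i, K (h⁻¹ • (x - θp i)) * L (θp i)) / (h ^ d * S) =
        ((1 / (B * h ^ d)) * ∑ i, Ki i x * L (θp i)) * (S / B)⁻¹ := by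
      rw [hKi]; field_simp
    rw [hgid]
    field_simp [hZ0.ne', hLsum.ne', hhd.ne', hB0.ne']
    ring
  set ψ : EuclideanSpace ℝ (Fin d) → ℝ :=
    fun x => |f x - g x| * (S / B)⁻¹ + f x * |c| with hψ
  have hψ_int : Integrable ψ := (hfgint.abs.mul_const _).add (hf_int.mul_const _)
  have hbound : ∀ x, |πtil x - πhat x| ≤ ψ x := by
    intro x
    rw [hdecomp x, hψ]
    refine le_trans (abs_add_le _ _) ?_
    rw [abs_mul, abs_mul, abs_of_pos (inv_pos.2 hSB), abs_sub_comm,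
      abs_of_nonneg (hf_nonneg x)]
  have hπth_int : Integrable (fun x => |πtil x - πhat x|) := by
    have : Integrable (fun x => (g x - f x) * (S / B)⁻¹ + f x * c) :=
      ((hg_int.sub hf_int).mul_const _).add (hf_int.mul_const _)
    exact (this.congr (by filter_upwards with x; exact (hdecomp x).symm)).abs
  have hψ_val : (∫ x, ψ x) ≤ 2 * M * h * C * (S / B)⁻¹ := by
    rw [hψ]
    rw [integral_add (hfgint.abs.mul_const _) (hf_int.mul_const _),
      integral_mul_const, integral_mul_const, ← hZf]
    have t1 : (∫ x, |f x - g x|) * (S / B)⁻¹ ≤ M * h * C * (S / B)⁻¹ :=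
      mul_le_mul_of_nonneg_right h1 (inv_nonneg.2 hSB.le)
    have t2 : Z * |c| ≤ M * h * C * (S / B)⁻¹ := by
      rw [hc, abs_div, abs_of_pos (mul_pos hSB hZ0)]
      rw [show Z * (|Z - S / ↑B| / (S / ↑B * Z)) = |Z - S / ↑B| * (S / ↑B)⁻¹ from by
        field_simp]
      exact mul_le_mul_of_nonneg_right h2 (inv_nonneg.2 hSB.le)
    calc (∫ x, |f x - g x|) * (S / B)⁻¹ + Z * |c|
        ≤ M * h * C * (S / B)⁻¹ + M * h * C * (S / B)⁻¹ := add_le_add t1 t2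
      _ = 2 * M * h * C * (S / B)⁻¹ := by ring
  calc (∫ x, |πtil x - πhat x|) ≤ ∫ x, ψ x := integral_mono hπth_int hψ_int hbound
    _ ≤ 2 * M * h * C * (S / B)⁻¹ := hψ_val
    _ = 2 * M * h * C / ((B:ℝ)⁻¹ * S) := by
        rw [mul_comm (B:ℝ)⁻¹ S, ← div_eq_mul_inv S]
        exact (div_eq_mul_inv _ _).symm
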